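/- (Range Restriction, semantic form) Let S be a type, ctrl, plant : S → S → Prop relations, and φ, ψ, R : S → Prop. Assume the contract is valid: for all s, t, if φ s and t is reachable from s under the reflexive-transitive closure of ctrl;plant, then ψ t. Define the range-restricted plant plantR by plantR u v := plant u v ∧ R v. Then: (a) for all s, t, if φ s ∧ R s and t is reachable from s under the reflexive-transitive closure of ctrl;plantR, then ψ t; and (b) R is an invariant of the restricted system: for all s, t, if φ s ∧ R s and t is reachable from s under the reflexive-transitive closure of ctrl;plantR, then R t. -/

import Mathlib

/-- Sequential composition of relations: `s` steps to `t` via `R` then `Q`. -/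
def relComp {S : Type*} (R Q : S → S → Prop) : S → S → Prop :=
  fun s t => ∃ u, R s u ∧ Q u t

/-- Range Restriction (semantic form): restricting the plant with a range check
`?R` preserves the safety contract and makes `R` an invariant. -/
theorem range_restriction {S : Type*}
    (ctrl plant : S → S → Prop)
    (φ ψ R : S → Prop)
    (hC : ∀ s t, φ s → Relation.ReflTransGen (relComp ctrl plant) s t → ψ t) :
    (∀ s t, φ s ∧ R s →
        Relation.ReflTransGen (relComp ctrl (fun u v => plant u v ∧ R v)) s t → ψ t)
    ∧
    (∀ s t, φ s ∧ R s →
        Relation.ReflTransGen (relComp ctrl (fun u v => plant u v ∧ R v)) s t → R t) := by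
  constructor
  · intro s t ⟨hφ, _⟩ h
    exact hC s t hφ (Relation.ReflTransGen.mono (fun a b ⟨u, h1, h2, _⟩ => ⟨u, h1, h2⟩) s t h)
  · intro s t ⟨_, hR⟩ h
    induction h with
    | refl => exact hR
    | tail _ hstep ih => exact hstep.choose_spec.2.2
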